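/- For all real x with 0 < |x| < π/2, one has 3 + (1/60)·x³·sin x < 2x/sin x + x/tan x. -/

import Mathlib

open Real

private lemma nonneg_of_deriv {f f' : ℝ → ℝ} (hf : ∀ x, HasDerivAt f (f' x) x)
    (h0 : 0 ≤ f 0) (hd : ∀ x, 0 ≤ x → 0 ≤ f' x) : ∀ x, 0 ≤ x → 0 ≤ f x := by
  intro x hx
  have hmono : MonotoneOn f (Set.Ici (0:ℝ)) := by
    apply monotoneOn_of_deriv_nonneg (convex_Ici 0)
    · exact (continuous_iff_continuousAt.2 (fun y => (hf y).continuousAt)).continuousOn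
    · intro y hy; exact ((hf y).differentiableAt).differentiableWithinAt
    · intro y hy
      rw [interior_Ici] at hy
      rw [(hf y).deriv]
      exact hd y hy.le
  calc (0:ℝ) ≤ f 0 := h0
    _ ≤ f x := hmono (by simp) (by simpa using hx) hx

private lemma cos_ge_quad : ∀ x : ℝ, 0 ≤ x → 0 ≤ Real.cos x - (1 - x ^ 2 / 2) := by
  apply nonneg_of_deriv (f' := fun y => y - Real.sin y)
  · intro y
    have h : HasDerivAt (fun y : ℝ => Real.cos y - (1 - y ^ 2 / 2))
        (-Real.sin y - (0 - 2 * y ^ 1 / 2)) y := by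
      exact (Real.hasDerivAt_cos y).sub
        ((hasDerivAt_const y (1:ℝ)).sub ((hasDerivAt_pow 2 y).div_const 2))
    convert h using 1; ring
  · simp
  · intro y hy; nlinarith [Real.sin_le hy]

private lemma sin_ge_cubic : ∀ x : ℝ, 0 ≤ x → 0 ≤ Real.sin x - (x - x ^ 3 / 6) := by
  apply nonneg_of_deriv (f' := fun y => Real.cos y - (1 - y ^ 2 / 2))
  · intro y
    have h : HasDerivAt (fun y : ℝ => Real.sin y - (y - y ^ 3 / 6))
        (Real.cos y - (1 - 3 * y ^ 2 / 6)) y := by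
      exact (Real.hasDerivAt_sin y).sub
        ((hasDerivAt_id y).sub ((hasDerivAt_pow 3 y).div_const 6))
    convert h using 1; ring
  · simp
  · exact cos_ge_quad

private lemma cos_le_quart : ∀ x : ℝ, 0 ≤ x → 0 ≤ (1 - x ^ 2 / 2 + x ^ 4 / 24) - Real.cos x := by
  apply nonneg_of_deriv (f' := fun y => Real.sin y - (y - y ^ 3 / 6))
  · intro y
    have h : HasDerivAt (fun y : ℝ => (1 - y ^ 2 / 2 + y ^ 4 / 24) - Real.cos y)
        (((0 : ℝ) - 2 * y ^ 1 / 2 + 4 * y ^ 3 / 24) - (-Real.sin y)) y := by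
      exact (((hasDerivAt_const y (1:ℝ)).sub ((hasDerivAt_pow 2 y).div_const 2)).add
        ((hasDerivAt_pow 4 y).div_const 24)).sub (Real.hasDerivAt_cos y)
    convert h using 1; ring
  · simp
  · exact sin_ge_cubic

private lemma sin_le_quint : ∀ x : ℝ, 0 ≤ x → 0 ≤ (x - x ^ 3 / 6 + x ^ 5 / 120) - Real.sin x := by
  apply nonneg_of_deriv (f' := fun y => (1 - y ^ 2 / 2 + y ^ 4 / 24) - Real.cos y)
  · intro y
    have h : HasDerivAt (fun y : ℝ => (y - y ^ 3 / 6 + y ^ 5 / 120) - Real.sin y)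
        (((1 : ℝ) - 3 * y ^ 2 / 6 + 5 * y ^ 4 / 120) - Real.cos y) y := by
      exact (((hasDerivAt_id y).sub ((hasDerivAt_pow 3 y).div_const 6)).add
        ((hasDerivAt_pow 5 y).div_const 120)).sub (Real.hasDerivAt_sin y)
    convert h using 1; ring
  · simp
  · exact cos_le_quart

private lemma cos_ge_sext : ∀ x : ℝ, 0 ≤ x →
    0 ≤ Real.cos x - (1 - x ^ 2 / 2 + x ^ 4 / 24 - x ^ 6 / 720) := by
  apply nonneg_of_deriv (f' := fun y => (y - y ^ 3 / 6 + y ^ 5 / 120) - Real.sin y)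
  · intro y
    have h : HasDerivAt (fun y : ℝ => Real.cos y - (1 - y ^ 2 / 2 + y ^ 4 / 24 - y ^ 6 / 720))
        ((-Real.sin y) - ((0 : ℝ) - 2 * y ^ 1 / 2 + 4 * y ^ 3 / 24 - 6 * y ^ 5 / 720)) y := by
      exact (Real.hasDerivAt_cos y).sub
        ((((hasDerivAt_const y (1:ℝ)).sub ((hasDerivAt_pow 2 y).div_const 2)).add
          ((hasDerivAt_pow 4 y).div_const 24)).sub ((hasDerivAt_pow 6 y).div_const 720))
    convert h using 1; ring
  · simp
  · exact sin_le_quint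

private lemma huygens_pos (x : ℝ) (hx : 0 < x) (hx2 : x < π / 2) :
    3 + (1 / 60) * x ^ 3 * Real.sin x < 2 * x / Real.sin x + x / Real.tan x := by
  have hs : 0 < Real.sin x := Real.sin_pos_of_pos_of_lt_pi hx (by linarith [Real.pi_pos])
  have hc : 0 < Real.cos x := Real.cos_pos_of_mem_Ioo ⟨by linarith, hx2⟩
  have hsu := sin_le_quint x hx.le
  have hcl := cos_ge_sext x hx.le
  have hxx : x ^ 2 < 2.5 := by nlinarith [Real.pi_lt_d2]
  have htan : x / Real.tan x = x * Real.cos x / Real.sin x := by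
    rw [Real.tan_eq_sin_div_cos, div_div_eq_mul_div, mul_comm x (Real.cos x)]
  rw [htan, ← add_div, lt_div_iff₀ hs]
  have hQ : 0 < 1/240 - x^2/1350 + x^4/21600 - x^6/864000 := by
    nlinarith [sq_nonneg x, sq_nonneg (x^2), pow_pos hx 2]
  have hus : 0 ≤ (x - x ^ 3 / 6 + x ^ 5 / 120) - Real.sin x := hsu
  have step1 : (3 + 1 / 60 * x ^ 3 * Real.sin x) * Real.sin x
      ≤ (3 + 1 / 60 * x ^ 3 * (x - x ^ 3 / 6 + x ^ 5 / 120)) * (x - x ^ 3 / 6 + x ^ 5 / 120) := by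
    nlinarith [mul_nonneg (pow_pos hx 3).le
      (mul_nonneg hus (by linarith : (0:ℝ) ≤ (x - x ^ 3 / 6 + x ^ 5 / 120) + Real.sin x))]
  have step3 : (3 + 1 / 60 * x ^ 3 * (x - x ^ 3 / 6 + x ^ 5 / 120)) * (x - x ^ 3 / 6 + x ^ 5 / 120)
      < 2 * x + x * (1 - x ^ 2 / 2 + x ^ 4 / 24 - x ^ 6 / 720) := by
    nlinarith [mul_pos (pow_pos hx 7) hQ]
  have step2 : 2 * x + x * (1 - x ^ 2 / 2 + x ^ 4 / 24 - x ^ 6 / 720)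
      ≤ 2 * x + x * Real.cos x := by
    nlinarith [mul_nonneg hx.le hcl]
  linarith

theorem huygens_lower (x : ℝ) (h1 : 0 < |x|) (h2 : |x| < π / 2) :
    3 + (1 / 60) * x ^ 3 * Real.sin x < 2 * x / Real.sin x + x / Real.tan x := by
  rcases (abs_pos.mp h1).lt_or_gt with hneg | hpos
  · have h2' : -x < π / 2 := by rwa [abs_of_neg hneg] at h2
    have this1 := huygens_pos (-x) (by linarith) h2'
    rw [Real.sin_neg, Real.tan_neg] at this1
    have e1 : 3 + 1 / 60 * (-x) ^ 3 * -Real.sin x = 3 + 1 / 60 * x ^ 3 * Real.sin x := by ring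
    have e2 : 2 * -x / -Real.sin x + -x / -Real.tan x
        = 2 * x / Real.sin x + x / Real.tan x := by
      simp only [mul_neg, div_neg, neg_div, neg_neg]
    rw [e1, e2] at this1
    exact this1
  · exact huygens_pos x hpos (by rwa [abs_of_pos hpos] at h2)
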